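/- Let Φ, Φ̃ : ℂⁿ → ℝ be strictly plurisubharmonic quadratic forms with Φ̃ ≤ Φ pointwise, let κ♭ : ℂⁿ → ℂⁿ be an ℝ-linear isomorphism, let â ∈ ℂ, and let Ψ be a holomorphic quadratic form on ℂ^{2n} such that 2 Re Ψ(z, w̄) = Φ̃(z) + Φ(w) − R(z, w) for all z, w ∈ ℂⁿ, where R is a nonnegative quadratic form on ℂⁿ × ℂⁿ (as a real vector space) satisfying c|z − κ♭(w)|² ≤ R(z, w) ≤ C|z − κ♭(w)|² for some C, c > 0. Let u be an entire function with |u(w)| ≤ C₀⟨w⟩^{N} e^{Φ(w)} on ℂⁿ for some C₀ > 0, N ∈ ℝ, and set G u(z) = â ∫_{ℂⁿ} e^{2Ψ(z,w̄)} u(w) e^{-2Φ(w)} dL(w). Then for every z₀ ∈ ℂⁿ∖{0} with Φ(z₀) − Φ̃(z₀) > 0, there exist an open conic neighborhood V of z₀ in ℂⁿ∖{0} and constants C₁, c₁ > 0 such that |Gu(z)| ≤ C₁ e^{Φ(z) − c₁|z|²} for all z ∈ V; in other words, WF^{1/2}_Φ(Gu) is contained in the radical Rad(Φ − Φ̃)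 = {z ∈ ℂⁿ : Φ(z) − Φ̃(z) = 0}. -/

import Mathlib

open Matrix MeasureTheory ENNReal

noncomputable section

/-- The squared Euclidean norm `|z|²` on `ℂⁿ`. -/
def eSq {n : ℕ} (z : Fin n → ℂ) : ℝ := ∑ i, Complex.normSq (z i)

/-- The Japanese bracket `⟨z⟩ = (1 + |z|²)^{1/2}`. -/
def jb {n : ℕ} (z : Fin n → ℂ) : ℝ := Real.sqrt (1 + eSq z)

/-- `Φ : ℂⁿ → ℝ` is a (real) quadratic form of the underlying real coordinates. -/
def IsRQuad {n : ℕ} (Φ : (Fin n → ℂ) → ℝ) : Prop :=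
  ∃ B : (Fin n → ℂ) →ₗ[ℝ] (Fin n → ℂ) →ₗ[ℝ] ℝ, ∀ z, Φ z = B z z

/-- `Φ : ℂⁿ → ℝ` is a strictly plurisubharmonic quadratic form.  For a quadratic form `Φ`,
the Levi form satisfies `(∂²_{z z̄}Φ) w ⋅ w̄ = (Φ(w) + Φ(i w))/2`, so positive definiteness of
the Levi matrix is equivalent to `Φ(w) + Φ(i·w) > 0` for all `w ≠ 0`. -/
def IsSPSH {n : ℕ} (Φ : (Fin n → ℂ) → ℝ) : Prop :=
  IsRQuad Φ ∧ ∀ z : Fin n → ℂ, z ≠ 0 → 0 < Φ z + Φ (Complex.I • z)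

/-- The squared weighted norm `‖u‖_s² = ∫ |u(z)|² ⟨z⟩^{2s} e^{-2Φ(z)} L(dz)` (in `ℝ≥0∞`). -/
def hnorm {n : ℕ} (Φ : (Fin n → ℂ) → ℝ) (s : ℝ) (u : (Fin n → ℂ) → ℂ) : ℝ≥0∞ :=
  ∫⁻ z : Fin n → ℂ, (‖u z‖₊ : ℝ≥0∞) ^ 2 * ENNReal.ofReal (jb z ^ (2 * s) * Real.exp (-2 * Φ z))

/-- A conic subset of `ℂⁿ`. -/
def IsConic {n : ℕ} (V : Set (Fin n → ℂ)) : Prop := ∀ z ∈ V, ∀ t : ℝ, 0 < t → t • z ∈ V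

/-- The `1/2`-Gelfand–Shilov wavefront set of `u` relative to `Φ`: the complement in
`ℂⁿ∖{0}` of the points having an open conic neighborhood in `ℂⁿ∖{0}` on which
`|u(z)| ≤ C e^{Φ(z) - c|z|²}`. -/
def wf {n : ℕ} (Φ : (Fin n → ℂ) → ℝ) (u : (Fin n → ℂ) → ℂ) : Set (Fin n → ℂ) :=
  {z₀ | z₀ ≠ 0 ∧ ¬ ∃ V : Set (Fin n → ℂ), IsOpen V ∧ IsConic V ∧ (0 : Fin n → ℂ) ∉ V ∧ z₀ ∈ V ∧
      ∃ C c : ℝ, 0 < C ∧ 0 < c ∧ ∀ z ∈ V, ‖u z‖ ≤ C * Real.exp (Φ z - c * eSq z)}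

/-- A holomorphic quadratic form on `ℂ^{2n} = ℂⁿ_z × ℂⁿ_θ`. -/
def IsCQuad2 {n : ℕ} (Ψ : (Fin n → ℂ) → (Fin n → ℂ) → ℂ) : Prop :=
  ∃ B : ((Fin n → ℂ) × (Fin n → ℂ)) →ₗ[ℂ] ((Fin n → ℂ) × (Fin n → ℂ)) →ₗ[ℂ] ℂ,
    ∀ z θ, Ψ z θ = B (z, θ) (z, θ)

/-- A real quadratic form on `ℂⁿ × ℂⁿ` viewed as a real vector space. -/
def IsRQuadPair {n : ℕ} (R : (Fin n → ℂ) → (Fin n → ℂ) → ℝ) : Prop :=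
  ∃ B : ((Fin n → ℂ) × (Fin n → ℂ)) →ₗ[ℝ] ((Fin n → ℂ) × (Fin n → ℂ)) →ₗ[ℝ] ℝ,
    ∀ z w, R z w = B (z, w) (z, w)

/-- The Bergman-form integral operator
`G u (z) = a ∫ e^{2Ψ(z, w̄)} u(w) e^{-2Φ(w)} L(dw)`. -/
def berg {n : ℕ} (a : ℂ) (Ψ : (Fin n → ℂ) → (Fin n → ℂ) → ℂ) (Φ : (Fin n → ℂ) → ℝ)
    (u : (Fin n → ℂ) → ℂ) (z : Fin n → ℂ) : ℂ :=
  a * ∫ w : Fin n → ℂ, Complex.exp (2 * Ψ z (star w)) * u w * (Real.exp (-2 * Φ w) : ℂ)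

lemma eSq_nonneg {n : ℕ} (z : Fin n → ℂ) : 0 ≤ eSq z :=
  Finset.sum_nonneg fun i _ => Complex.normSq_nonneg _

lemma continuous_eSq {n : ℕ} : Continuous (eSq (n := n)) := by
  unfold eSq
  exact continuous_finset_sum _ fun i _ => Complex.continuous_normSq.comp (continuous_apply i)

lemma eSq_smul {n : ℕ} (t : ℝ) (z : Fin n → ℂ) : eSq (t • z) = t ^ 2 * eSq z := by
  unfold eSq
  rw [Finset.mul_sum]
  refine Finset.sum_congr rfl fun i _ => ?_
  simp [Pi.smul_apply, Complex.real_smul, Complex.normSq_mul, Complex.normSq_ofReal, sq]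

lemma eSq_zero {n : ℕ} : eSq (0 : Fin n → ℂ) = 0 := by simp [eSq]

lemma eSq_sub_le {n : ℕ} (x y : Fin n → ℂ) : eSq (x - y) ≤ 2 * eSq x + 2 * eSq y := by
  unfold eSq
  rw [Finset.mul_sum, Finset.mul_sum, ← Finset.sum_add_distrib]
  refine Finset.sum_le_sum fun i _ => ?_
  have h : ‖(x - y) i‖ ≤ ‖x i‖ + ‖y i‖ := by
    simpa using norm_sub_le (x i) (y i)
  have h2 : ‖(x - y) i‖ ^ 2 ≤ (‖x i‖ + ‖y i‖) ^ 2 := by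
    exact pow_le_pow_left₀ (norm_nonneg _) h 2
  have h3 : (‖x i‖ + ‖y i‖) ^ 2 ≤ 2 * ‖x i‖ ^ 2 + 2 * ‖y i‖ ^ 2 := by nlinarith [sq_nonneg (‖x i‖ - ‖y i‖)]
  calc Complex.normSq ((x - y) i) = ‖(x - y) i‖ ^ 2 := by rw [← Complex.sq_norm]
  _ ≤ 2 * ‖x i‖ ^ 2 + 2 * ‖y i‖ ^ 2 := le_trans h2 h3
  _ = 2 * Complex.normSq (x i) + 2 * Complex.normSq (y i) := by
      rw [← Complex.sq_norm, ← Complex.sq_norm]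

lemma norm_sq_le_eSq {n : ℕ} (z : Fin n → ℂ) : ‖z‖ ^ 2 ≤ eSq z := by
  have h : ‖z‖ ≤ Real.sqrt (eSq z) := by
    refine pi_norm_le_iff_of_nonneg (Real.sqrt_nonneg _) |>.2 fun i => ?_
    have h1 : Complex.normSq (z i) ≤ eSq z :=
      Finset.single_le_sum (fun j _ => Complex.normSq_nonneg (z j)) (Finset.mem_univ i)
    have : ‖z i‖ = Real.sqrt (Complex.normSq (z i)) := by
      rw [Complex.norm_def]
    rw [this]
    exact Real.sqrt_le_sqrt h1
  calc ‖z‖ ^ 2 ≤ Real.sqrt (eSq z) ^ 2 := pow_le_pow_left₀ (norm_nonneg _) h 2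
  _ = eSq z := Real.sq_sqrt (eSq_nonneg z)

lemma eSq_le_norm {n : ℕ} (z : Fin n → ℂ) : eSq z ≤ n * ‖z‖ ^ 2 := by
  unfold eSq
  calc ∑ i, Complex.normSq (z i) ≤ ∑ _i : Fin n, ‖z‖ ^ 2 := by
        refine Finset.sum_le_sum fun i _ => ?_
        rw [← Complex.sq_norm]
        exact pow_le_pow_left₀ (norm_nonneg _) (norm_le_pi_norm z i) 2
  _ = n * ‖z‖ ^ 2 := by simp [Finset.sum_const, nsmul_eq_mul]

lemma poly_exp (k : ℕ) (s : ℝ) (hs : 0 < s) :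
    ∃ M : ℝ, 0 < M ∧ ∀ t : ℝ, 0 ≤ t → (1 + t) ^ k ≤ M * Real.exp (s * t) := by
  rcases Nat.eq_zero_or_pos k with hk | hk
  · exact ⟨1, one_pos, fun t ht => by
      simpa [hk] using Real.one_le_exp (by positivity : (0:ℝ) ≤ s * t)⟩
  · set C : ℝ := max 1 (k / s) with hC
    have hC1 : (1 : ℝ) ≤ C := le_max_left _ _
    have hCk : (k : ℝ) / s ≤ C := le_max_right _ _
    refine ⟨C ^ k, by positivity, fun t ht => ?_⟩
    have hkpos : (0 : ℝ) < k := by exact_mod_cast hk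
    have h1 : 1 + t ≤ C * Real.exp (s / k * t) := by
      have he : 1 + s / k * t ≤ Real.exp (s / k * t) := by
        have := Real.add_one_le_exp (s / k * t); linarith
      have h2 : C * (1 + s / k * t) ≤ C * Real.exp (s / k * t) :=
        mul_le_mul_of_nonneg_left he (by linarith)
      have h3 : 1 + t ≤ C * (1 + s / k * t) := by
        have h4 : 1 ≤ C * (s / k) := by
          have h5 : (k : ℝ) ≤ C * s := (div_le_iff₀ hs).1 hCk
          rw [mul_div_assoc', le_div_iff₀ hkpos]
          linarith
        nlinarith
      linarith
    calc (1 + t) ^ k ≤ (C * Real.exp (s / k * t)) ^ k := by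
          apply pow_le_pow_left₀ (by linarith) h1
    _ = C ^ k * Real.exp (s / k * t) ^ k := mul_pow _ _ _
    _ = C ^ k * Real.exp (s * t) := by
        rw [← Real.exp_nat_mul]
        congr 1
        field_simp

lemma IsRQuad.continuous {n : ℕ} {Φ : (Fin n → ℂ) → ℝ} (h : IsRQuad Φ) : Continuous Φ := by
  obtain ⟨B, hB⟩ := h
  have hΦ : Φ = fun z => B z z := funext hB
  rw [hΦ]
  set L : (Fin n → ℂ) →ₗ[ℝ] ((Fin n → ℂ) →L[ℝ] ℝ) :=
    (LinearMap.toContinuousLinearMap : ((Fin n → ℂ) →ₗ[ℝ] ℝ) ≃ₗ[ℝ] ((Fin n → ℂ) →L[ℝ] ℝ)).toLinearMap ∘ₗ B with hL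
  have hLc : Continuous L := L.continuous_of_finiteDimensional
  have : (fun z => B z z) = fun z => (L z) z := by
    funext z; simp [hL]
  rw [this]
  exact isBoundedBilinearMap_apply.continuous.comp (hLc.prodMk continuous_id)

lemma IsRQuad.homog {n : ℕ} {Φ : (Fin n → ℂ) → ℝ} (h : IsRQuad Φ) (t : ℝ) (z : Fin n → ℂ) :
    Φ (t • z) = t ^ 2 * Φ z := by
  obtain ⟨B, hB⟩ := h
  rw [hB, hB, LinearMap.map_smul]
  simp only [LinearMap.smul_apply, LinearMap.map_smul, smul_eq_mul]
  ring

lemma IsRQuad.zero {n : ℕ} {Φ : (Fin n → ℂ) → ℝ} (h : IsRQuad Φ) : Φ 0 = 0 := by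
  have := h.homog 0 0
  simpa using this

lemma integrable_gauss {n : ℕ} {b : ℝ} (hb : 0 < b) :
    Integrable (fun v : Fin n → ℂ => Real.exp (-b * eSq v)) := by
  have h1 : Integrable (fun ζ : ℂ => Real.exp (-b * ‖ζ‖ ^ 2)) := by
    have h0 := (GaussianFourier.integrable_cexp_neg_mul_sq_norm_add
      (V := ℂ) (b := (b : ℂ)) (by simpa using hb) 0 0).norm
    refine h0.congr ?_
    filter_upwards with v
    rw [Complex.norm_exp]
    have : (-(b:ℂ) * (‖v‖:ℂ) ^ 2 + 0 * ((inner ℝ (0:ℂ) v : ℝ) : ℂ)).re = -b * ‖v‖ ^ 2 := by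
      simp [← Complex.ofReal_pow]
    rw [this]
  have h2 : Integrable (fun v : Fin n → ℂ => ∏ i, Real.exp (-b * ‖v i‖ ^ 2)) :=
    MeasureTheory.Integrable.fintype_prod (fun _ => h1)
  refine h2.congr ?_
  filter_upwards with v
  rw [← Real.exp_sum]
  congr 1
  rw [eSq, Finset.mul_sum]
  refine Finset.sum_congr rfl fun i _ => ?_
  rw [← Complex.sq_norm]

lemma comp_affine {n : ℕ} (κ : (Fin n → ℂ) ≃ₗ[ℝ] (Fin n → ℂ)) (G : (Fin n → ℂ) → ℝ)
    (hG : Integrable G) :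
    ∃ D : ℝ, 0 ≤ D ∧ ∀ z : Fin n → ℂ, Integrable (fun w => G (z - κ w)) ∧
      ∫ w, G (z - κ w) = D * ∫ v, G v := by
  classical
  set f : (Fin n → ℂ) →ₗ[ℝ] (Fin n → ℂ) := -κ.toLinearMap with hf
  have hdet : LinearMap.det f ≠ 0 := by
    have h1 : LinearMap.det (κ.toLinearMap) ≠ 0 := (LinearEquiv.isUnit_det' κ).ne_zero
    have h2 : f = (-1 : ℝ) • κ.toLinearMap := by rw [hf, neg_one_smul ℝ κ.toLinearMap]
    rw [h2, LinearMap.det_smul]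
    simp [h1]
  set Dinf : ℝ≥0∞ := ENNReal.ofReal |(LinearMap.det f)⁻¹| with hDinf
  have hDtop : Dinf ≠ ⊤ := ENNReal.ofReal_ne_top
  have hmap0 : Measure.map f volume = Dinf • volume :=
    Measure.map_linearMap_addHaar_eq_smul_addHaar volume hdet
  refine ⟨Dinf.toReal, ENNReal.toReal_nonneg, fun z => ?_⟩
  have hcoe2 : (fun w : Fin n → ℂ => z - κ w) = (fun v : Fin n → ℂ => z + v) ∘ f := by
    funext w
    show z - κ w = z + -(κ w)
    rw [sub_eq_add_neg]
  have hmapT : Measure.map (fun w : Fin n → ℂ => z - κ w) volume = Dinf • volume := by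
    rw [hcoe2, ← Measure.map_map (measurable_const_add z)
      (f.continuous_of_finiteDimensional.measurable), hmap0, Measure.map_smul,
      Measure.IsAddLeftInvariant.map_add_left_eq_self z]
  have membed : MeasurableEmbedding (fun w : Fin n → ℂ => z - κ w) := by
    have h := ((κ.toContinuousLinearEquiv.toHomeomorph.trans
      (Homeomorph.neg (Fin n → ℂ))).trans (Homeomorph.addLeft z)).measurableEmbedding
    have hcoe : ⇑((κ.toContinuousLinearEquiv.toHomeomorph.trans
        (Homeomorph.neg (Fin n → ℂ))).trans (Homeomorph.addLeft z))
        = (fun w : Fin n → ℂ => z - κ w) := by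
      funext w
      simp [sub_eq_add_neg]
    rwa [hcoe] at h
  have hInt : Integrable (fun w : Fin n → ℂ => G (z - κ w)) := by
    have h3 : Integrable G (Measure.map (fun w : Fin n → ℂ => z - κ w) volume) := by
      rw [hmapT]; exact hG.smul_measure hDtop
    exact (membed.integrable_map_iff).1 h3
  refine ⟨hInt, ?_⟩
  have h4 := membed.integral_map (g := G) (μ := volume)
  rw [hmapT, integral_smul_measure] at h4
  rw [← h4, smul_eq_mul]

set_option maxHeartbeats 1000000 in

lemma key_bound {n : ℕ} (Φ Φt : (Fin n → ℂ) → ℝ)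
    (κ : (Fin n → ℂ) ≃ₗ[ℝ] (Fin n → ℂ)) (a : ℂ)
    (Ψ : (Fin n → ℂ) → (Fin n → ℂ) → ℂ)
    (R : (Fin n → ℂ) → (Fin n → ℂ) → ℝ)
    (hre : ∀ z w : Fin n → ℂ, 2 * (Ψ z (star w)).re = Φt z + Φ w - R z w)
    (c : ℝ) (hc : 0 < c)
    (hlow : ∀ z w : Fin n → ℂ, c * eSq (z - κ w) ≤ R z w)
    (u : (Fin n → ℂ) → ℂ) (C₀ N : ℝ) (hC₀ : 0 < C₀)
    (hg : ∀ w : Fin n → ℂ, ‖u w‖ ≤ C₀ * jb w ^ N * Real.exp (Φ w)) :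
    ∃ (k : ℕ) (K : ℝ), 0 < K ∧
      ∀ z, ‖berg a Ψ Φ u z‖ ≤ K * ((1 + eSq z) ^ k * Real.exp (Φt z)) := by
  classical
  set k : ℕ := ⌈N⌉₊ with hk
  have hN2k : N ≤ ((2 * k : ℕ) : ℝ) := by
    rw [hk]
    calc N ≤ (⌈N⌉₊ : ℝ) := Nat.le_ceil N
    _ ≤ ((2 * ⌈N⌉₊ : ℕ) : ℝ) := by
        push_cast
        have : (0:ℝ) ≤ (⌈N⌉₊ : ℝ) := Nat.cast_nonneg _
        linarith
  -- jb ^ N ≤ (1 + eSq w) ^ k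
  have hjb1 : ∀ w : Fin n → ℂ, (1 : ℝ) ≤ jb w := by
    intro w
    show (1 : ℝ) ≤ Real.sqrt (1 + eSq w)
    calc (1 : ℝ) = Real.sqrt 1 := Real.sqrt_one.symm
    _ ≤ Real.sqrt (1 + eSq w) := Real.sqrt_le_sqrt (by linarith [eSq_nonneg w])
  have hjbN : ∀ w : Fin n → ℂ, jb w ^ N ≤ (1 + eSq w) ^ k := by
    intro w
    calc jb w ^ N ≤ jb w ^ (((2 * k : ℕ) : ℝ)) :=
          Real.rpow_le_rpow_of_exponent_le (hjb1 w) hN2k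
    _ = jb w ^ (2 * k : ℕ) := Real.rpow_natCast _ _
    _ = (jb w ^ 2) ^ k := pow_mul _ 2 k
    _ = (1 + eSq w) ^ k := by
        rw [jb, Real.sq_sqrt (by linarith [eSq_nonneg w])]
  -- operator norm of κ.symm
  set T := LinearMap.toContinuousLinearMap (κ.symm.toLinearMap) with hT
  set Mo : ℝ := ‖T‖ with hMo
  have hMo0 : 0 ≤ Mo := norm_nonneg _
  have hTle : ∀ v, ‖κ.symm v‖ ≤ Mo * ‖v‖ := by
    intro v
    have := T.le_opNorm v
    simpa [hT] using this
  set A : ℝ := 1 + 2 * n * Mo ^ 2 with hA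
  have hA1 : 1 ≤ A := by
    have h1 : (0:ℝ) ≤ 2 * n * Mo ^ 2 := by positivity
    linarith
  have hclaim : ∀ z w : Fin n → ℂ,
      1 + eSq w ≤ A * ((1 + eSq z) * (1 + eSq (z - κ w))) := by
    intro z w
    have a1 : ‖w‖ ≤ Mo * ‖κ w‖ := by
      have := hTle (κ w)
      rwa [κ.symm_apply_apply] at this
    have a2 : ‖w‖ ^ 2 ≤ Mo ^ 2 * ‖κ w‖ ^ 2 := by nlinarith [norm_nonneg w, norm_nonneg (κ w)]
    have a3 : eSq w ≤ (n : ℝ) * (Mo ^ 2 * eSq (κ w)) := by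
      have b1 := eSq_le_norm w
      have b2 := norm_sq_le_eSq (κ w)
      have hn0 : (0 : ℝ) ≤ n := Nat.cast_nonneg n
      nlinarith [norm_nonneg (κ w)]
    have a4 : eSq (κ w) ≤ 2 * eSq z + 2 * eSq (z - κ w) := by
      have := eSq_sub_le z (z - κ w)
      rwa [_root_.sub_sub_cancel] at this
    have ha := eSq_nonneg z
    have hb := eSq_nonneg (z - κ w)
    have hn0 : (0 : ℝ) ≤ n := Nat.cast_nonneg n
    have hm0 : (0 : ℝ) ≤ (n : ℝ) * Mo ^ 2 := by positivity
    rw [hA]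
    nlinarith [mul_nonneg ha hb, mul_nonneg hm0 ha, mul_nonneg hm0 hb,
      mul_nonneg (mul_nonneg hm0 ha) hb]
  obtain ⟨M₁, hM₁0, hM₁⟩ := poly_exp k (c / 2) (half_pos hc)
  -- pointwise bound
  set Q : (Fin n → ℂ) → ℝ := fun z => (C₀ * A ^ k * M₁) * ((1 + eSq z) ^ k * Real.exp (Φt z))
    with hQ
  have hQ0 : ∀ z, 0 ≤ Q z := by
    intro z
    have := eSq_nonneg z
    positivity
  have hpt : ∀ z w : Fin n → ℂ,
      ‖Complex.exp (2 * Ψ z (star w)) * u w * ((Real.exp (-2 * Φ w) : ℝ) : ℂ)‖ ≤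
        Q z * Real.exp (-(c / 2) * eSq (z - κ w)) := by
    intro z w
    have hb0 := eSq_nonneg (z - κ w)
    have ha0 := eSq_nonneg z
    have hw0 := eSq_nonneg w
    have hnorm : ‖Complex.exp (2 * Ψ z (star w)) * u w * ((Real.exp (-2 * Φ w) : ℝ) : ℂ)‖ =
        Real.exp (2 * (Ψ z (star w)).re) * ‖u w‖ * Real.exp (-2 * Φ w) := by
      rw [norm_mul, norm_mul, Complex.norm_exp]
      have h1 : (2 * Ψ z (star w)).re = 2 * (Ψ z (star w)).re := by simp
      rw [h1, Complex.norm_real, Real.norm_eq_abs, abs_of_pos (Real.exp_pos _)]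
    rw [hnorm]
    have hQexp : 0 ≤ Real.exp (2 * (Ψ z (star w)).re) := (Real.exp_pos _).le
    calc Real.exp (2 * (Ψ z (star w)).re) * ‖u w‖ * Real.exp (-2 * Φ w)
        ≤ Real.exp (2 * (Ψ z (star w)).re) * (C₀ * jb w ^ N * Real.exp (Φ w)) *
          Real.exp (-2 * Φ w) := by gcongr; exact hg w
      _ = (C₀ * jb w ^ N) * Real.exp (2 * (Ψ z (star w)).re + Φ w + -2 * Φ w) := by
          rw [Real.exp_add, Real.exp_add]; ring
      _ = (C₀ * jb w ^ N) * Real.exp (Φt z - R z w) := by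
          rw [hre z w]; congr 1; ring
      _ ≤ (C₀ * (1 + eSq w) ^ k) * Real.exp (Φt z - c * eSq (z - κ w)) := by
          gcongr
          · exact hjbN w
          · linarith [hlow z w]
      _ ≤ (C₀ * (A ^ k * ((1 + eSq z) ^ k * (M₁ * Real.exp (c / 2 * eSq (z - κ w)))))) *
          Real.exp (Φt z - c * eSq (z - κ w)) := by
          gcongr
          calc (1 + eSq w) ^ k ≤ (A * ((1 + eSq z) * (1 + eSq (z - κ w)))) ^ k :=
                pow_le_pow_left₀ (by linarith) (hclaim z w) k
          _ = A ^ k * ((1 + eSq z) ^ k * (1 + eSq (z - κ w)) ^ k) := by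
              rw [mul_pow, mul_pow]
          _ ≤ A ^ k * ((1 + eSq z) ^ k * (M₁ * Real.exp (c / 2 * eSq (z - κ w)))) := by
              gcongr
              exact hM₁ _ hb0
      _ = Q z * Real.exp (-(c / 2) * eSq (z - κ w)) := by
          have e2 : Real.exp (c / 2 * eSq (z - κ w)) *
              Real.exp (-(c / 2) * eSq (z - κ w)) = 1 := by
            rw [← Real.exp_add,
              show c / 2 * eSq (z - κ w) + -(c / 2) * eSq (z - κ w) = 0 from by ring,
              Real.exp_zero]
          have e1 : Real.exp (Φt z - c * eSq (z - κ w)) =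
              Real.exp (Φt z) * Real.exp (-(c / 2) * eSq (z - κ w)) *
              Real.exp (-(c / 2) * eSq (z - κ w)) := by
            rw [← Real.exp_add, ← Real.exp_add]; congr 1; ring
          rw [hQ, e1]
          simp only []
          linear_combination (C₀ * A ^ k * (1 + eSq z) ^ k * M₁ * Real.exp (Φt z) *
            Real.exp (-(c / 2) * eSq (z - κ w))) * e2
  -- assemble
  obtain ⟨D, hD0, hDz⟩ := comp_affine κ (fun v => Real.exp (-(c / 2) * eSq v))
    (integrable_gauss (half_pos hc))
  set IG := ∫ v : Fin n → ℂ, Real.exp (-(c / 2) * eSq v) with hIG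
  have hIG0 : 0 ≤ IG := integral_nonneg fun v => (Real.exp_pos _).le
  have hAk : (0:ℝ) ≤ A ^ k := pow_nonneg (by linarith) k
  have hKco : (0:ℝ) ≤ ‖a‖ * (C₀ * A ^ k * M₁) * (D * IG) :=
    mul_nonneg (mul_nonneg (norm_nonneg a)
      (mul_nonneg (mul_nonneg hC₀.le hAk) hM₁0.le)) (mul_nonneg hD0 hIG0)
  refine ⟨k, ‖a‖ * (C₀ * A ^ k * M₁) * (D * IG) + 1, by linarith, fun z => ?_⟩
  have hint : Integrable (fun w : Fin n → ℂ => Q z * Real.exp (-(c / 2) * eSq (z - κ w))) :=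
    (hDz z).1.const_mul _
  have h5 : ‖∫ w : Fin n → ℂ, Complex.exp (2 * Ψ z (star w)) * u w *
      ((Real.exp (-2 * Φ w) : ℝ) : ℂ)‖ ≤ Q z * (D * IG) := by
    calc ‖∫ w : Fin n → ℂ, Complex.exp (2 * Ψ z (star w)) * u w *
        ((Real.exp (-2 * Φ w) : ℝ) : ℂ)‖
        ≤ ∫ w : Fin n → ℂ, ‖Complex.exp (2 * Ψ z (star w)) * u w *
          ((Real.exp (-2 * Φ w) : ℝ) : ℂ)‖ := norm_integral_le_integral_norm _
      _ ≤ ∫ w : Fin n → ℂ, Q z * Real.exp (-(c / 2) * eSq (z - κ w)) :=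
          integral_mono_of_nonneg (Filter.Eventually.of_forall fun w => norm_nonneg _)
            hint (Filter.Eventually.of_forall fun w => hpt z w)
      _ = Q z * ∫ w : Fin n → ℂ, Real.exp (-(c / 2) * eSq (z - κ w)) :=
          integral_const_mul _ _
      _ = Q z * (D * IG) := by rw [(hDz z).2]
  have hfac : (0:ℝ) ≤ (1 + eSq z) ^ k * Real.exp (Φt z) := by
    have := eSq_nonneg z
    positivity
  calc ‖berg a Ψ Φ u z‖
      = ‖a‖ * ‖∫ w : Fin n → ℂ, Complex.exp (2 * Ψ z (star w)) * u w *
        ((Real.exp (-2 * Φ w) : ℝ) : ℂ)‖ := by unfold berg; rw [norm_mul]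
    _ ≤ ‖a‖ * (Q z * (D * IG)) := mul_le_mul_of_nonneg_left h5 (norm_nonneg a)
    _ = (‖a‖ * (C₀ * A ^ k * M₁) * (D * IG)) * ((1 + eSq z) ^ k * Real.exp (Φt z)) := by
        rw [hQ]; ring
    _ ≤ (‖a‖ * (C₀ * A ^ k * M₁) * (D * IG) + 1) * ((1 + eSq z) ^ k * Real.exp (Φt z)) :=
        mul_le_mul_of_nonneg_right (by linarith) hfac

/-- With `Φ̃ ≤ Φ` strictly plurisubharmonic quadratic forms, `κ♭` an
`ℝ`-linear isomorphism, and `Ψ` a holomorphic quadratic form whose real part satisfies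
`2 Re Ψ(z,w̄) = Φ̃(z) + Φ(w) − R(z,w)` with `R` a nonnegative quadratic form comparable to
`|z − κ♭(w)|²`, the Bergman operator `G` regularizes outside the radical: for every
`z₀ ≠ 0` with `Φ(z₀) − Φ̃(z₀) > 0` there is an open conic neighborhood of `z₀` on which
`|Gu(z)| ≤ C₁ e^{Φ(z) − c₁|z|²}`; consequently `WF^{1/2}_Φ(Gu) ⊆ Rad(Φ − Φ̃)`. -/
theorem stmt_9 (n : ℕ) (hn : 1 ≤ n) (Φ Φt : (Fin n → ℂ) → ℝ)
    (hΦ : IsSPSH Φ) (hΦt : IsSPSH Φt) (hle : ∀ z, Φt z ≤ Φ z)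
    (κ : (Fin n → ℂ) ≃ₗ[ℝ] (Fin n → ℂ)) (a : ℂ)
    (Ψ : (Fin n → ℂ) → (Fin n → ℂ) → ℂ) (hΨ : IsCQuad2 Ψ)
    (R : (Fin n → ℂ) → (Fin n → ℂ) → ℝ) (hRq : IsRQuadPair R)
    (hR0 : ∀ z w, 0 ≤ R z w)
    (hre : ∀ z w : Fin n → ℂ, 2 * (Ψ z (star w)).re = Φt z + Φ w - R z w)
    (C c : ℝ) (hC : 0 < C) (hc : 0 < c)
    (hsand : ∀ z w : Fin n → ℂ, c * eSq (z - κ w) ≤ R z w ∧ R z w ≤ C * eSq (z - κ w))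
    (u : (Fin n → ℂ) → ℂ) (hu : Differentiable ℂ u)
    (C₀ N : ℝ) (hC₀ : 0 < C₀)
    (hg : ∀ w : Fin n → ℂ, ‖u w‖ ≤ C₀ * jb w ^ N * Real.exp (Φ w)) :
    (∀ z₀ : Fin n → ℂ, z₀ ≠ 0 → 0 < Φ z₀ - Φt z₀ →
      ∃ V : Set (Fin n → ℂ), IsOpen V ∧ IsConic V ∧ (0 : Fin n → ℂ) ∉ V ∧ z₀ ∈ V ∧
        ∃ C₁ c₁ : ℝ, 0 < C₁ ∧ 0 < c₁ ∧
          ∀ z ∈ V, ‖berg a Ψ Φ u z‖ ≤ C₁ * Real.exp (Φ z - c₁ * eSq z)) ∧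
    wf Φ (berg a Ψ Φ u) ⊆ {z : Fin n → ℂ | Φ z - Φt z = 0} := by
  have hlow : ∀ z w : Fin n → ℂ, c * eSq (z - κ w) ≤ R z w := fun z w => (hsand z w).1
  obtain ⟨k, K, hK, hbound⟩ := key_bound Φ Φt κ a Ψ R hre c hc hlow u C₀ N hC₀ hg
  have part1 : ∀ z₀ : Fin n → ℂ, z₀ ≠ 0 → 0 < Φ z₀ - Φt z₀ →
      ∃ V : Set (Fin n → ℂ), IsOpen V ∧ IsConic V ∧ (0 : Fin n → ℂ) ∉ V ∧ z₀ ∈ V ∧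
        ∃ C₁ c₁ : ℝ, 0 < C₁ ∧ 0 < c₁ ∧
          ∀ z ∈ V, ‖berg a Ψ Φ u z‖ ≤ C₁ * Real.exp (Φ z - c₁ * eSq z) := by
    intro z₀ hz0 hpos
    have he0 : 0 < eSq z₀ := by
      have h1 : 0 < ‖z₀‖ := norm_pos_iff.2 hz0
      have h2 := norm_sq_le_eSq z₀
      nlinarith
    set δ : ℝ := (Φ z₀ - Φt z₀) / (2 * eSq z₀) with hδdef
    have hδ : 0 < δ := div_pos hpos (by linarith)
    refine ⟨{z | δ * eSq z < Φ z - Φt z}, ?_, ?_, ?_, ?_, ?_⟩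
    · exact isOpen_lt (continuous_const.mul continuous_eSq)
        (hΦ.1.continuous.sub hΦt.1.continuous)
    · intro z hz t ht
      simp only [Set.mem_setOf_eq] at hz ⊢
      rw [eSq_smul, hΦ.1.homog, hΦt.1.homog]
      have ht2 : 0 < t ^ 2 := by positivity
      nlinarith
    · simp only [Set.mem_setOf_eq, eSq_zero, hΦ.1.zero, hΦt.1.zero]
      norm_num
    · simp only [Set.mem_setOf_eq]
      have hint : δ * eSq z₀ = (Φ z₀ - Φt z₀) / 2 := by
        rw [hδdef]
        field_simp
      rw [hint]
      linarith
    · obtain ⟨M₂, hM₂0, hM₂⟩ := poly_exp k (δ / 2) (half_pos hδ)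
      refine ⟨K * M₂, δ / 2, by positivity, by positivity, fun z hz => ?_⟩
      simp only [Set.mem_setOf_eq] at hz
      have hez := eSq_nonneg z
      calc ‖berg a Ψ Φ u z‖ ≤ K * ((1 + eSq z) ^ k * Real.exp (Φt z)) := hbound z
      _ ≤ K * ((M₂ * Real.exp (δ / 2 * eSq z)) * Real.exp (Φ z - δ * eSq z)) := by
          have b1 : (1 + eSq z) ^ k ≤ M₂ * Real.exp (δ / 2 * eSq z) := hM₂ _ hez
          have b2 : Real.exp (Φt z) ≤ Real.exp (Φ z - δ * eSq z) :=
            Real.exp_le_exp.2 (by linarith)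
          have b3 : (0:ℝ) ≤ (1 + eSq z) ^ k := by positivity
          have b4 : (0:ℝ) ≤ M₂ * Real.exp (δ / 2 * eSq z) := by positivity
          exact mul_le_mul_of_nonneg_left
            (mul_le_mul b1 b2 (Real.exp_pos _).le b4) hK.le
      _ = (K * M₂) * Real.exp (Φ z - δ / 2 * eSq z) := by
          have hee : Real.exp (δ / 2 * eSq z) * Real.exp (Φ z - δ * eSq z) =
              Real.exp (Φ z - δ / 2 * eSq z) := by
            rw [← Real.exp_add]; congr 1; ring
          rw [mul_assoc M₂, hee]
          ring
  refine ⟨part1, fun z₀ hz₀ => ?_⟩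
  simp only [wf, Set.mem_setOf_eq] at hz₀
  obtain ⟨hne, hnot⟩ := hz₀
  show Φ z₀ - Φt z₀ = 0
  by_contra h0
  have hpos : 0 < Φ z₀ - Φt z₀ := lt_of_le_of_ne (by linarith [hle z₀]) (Ne.symm h0)
  exact hnot (part1 z₀ hne hpos)
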